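/- (Strohmer/Renes via core adjacency) Let m > 2 and let H be a skew Hadamard matrix of order m whose first row consists entirely of ones (a normalized skew Hadamard), written in block form as [[1, 𝟙ᵀ], [−𝟙, A − Aᵀ + I]] where 𝟙 is the all-ones column vector of length m−1 and A is an (m−1)×(m−1) matrix with entries in {0,1} and zero diagonal. Set n = m−1 and α = −1/√m + i·√(1 − 1/m). Then S = α·A + ᾱ·Aᵀ is the signature matrix of a complex equiangular tight frame of size ((n−1)/2) × n; equivalently, S is self-adjoint with zero diagonal and unimodular off-diagonal entries and satisfies S² = (2/√(n+1))·S + (n−1)·I. -/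

import Mathlib

open Matrix

/-- The Welch bound parameter `μ = √((n−d)/(d(n−1)))`. -/
noncomputable def etfMu (d n : ℕ) : ℝ :=
  Real.sqrt (((n : ℝ) - d) / (d * ((n : ℝ) - 1)))

/-- `F` is an equiangular tight frame: unit-norm columns, pairwise inner products of
modulus equal to the Welch bound, and `F Fᴴ = (n/d) I`. -/
def IsETF {ι κ : Type} [Fintype ι] [Fintype κ] [DecidableEq ι] [DecidableEq κ]
    (F : Matrix ι κ ℂ) : Prop :=
  (∀ j, (Fᴴ * F) j j = 1) ∧
  (∀ j k : κ, j ≠ k →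
    ‖(Fᴴ * F) j k‖ = etfMu (Fintype.card ι) (Fintype.card κ)) ∧
  F * Fᴴ = ((Fintype.card κ : ℂ) / (Fintype.card ι : ℂ)) • 1

/-- `S` is the signature matrix of the ETF `F`, i.e. `S = (1/μ)(Fᴴ F − I)`. -/
def IsSignatureOf {ι κ : Type} [Fintype ι] [Fintype κ] [DecidableEq ι] [DecidableEq κ]
    (S : Matrix κ κ ℂ) (F : Matrix ι κ ℂ) : Prop :=
  IsETF F ∧ S = ((etfMu (Fintype.card ι) (Fintype.card κ) : ℝ) : ℂ)⁻¹ • (Fᴴ * F - 1)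

/-- A Hadamard matrix: `±1` entries and `Hᵀ H = m I`. -/
def IsHadamard {ι : Type} [Fintype ι] [DecidableEq ι] (H : Matrix ι ι ℝ) : Prop :=
  (∀ i j, H i j = 1 ∨ H i j = -1) ∧ Hᵀ * H = (Fintype.card ι : ℝ) • 1

/-- A skew Hadamard matrix: `H = C + I` with `Cᵀ = −C`. -/
def IsSkewHadamard {ι : Type} [Fintype ι] [DecidableEq ι] (H : Matrix ι ι ℝ) : Prop :=
  _root_.IsHadamard H ∧ (H - 1)ᵀ = -(H - 1)

lemma etf_construct {n d : ℕ} (hn : 0 < n) (hd : 0 < d)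
    (G : Matrix (Fin n) (Fin n) ℂ) (hG : G.IsHermitian)
    (hG2 : G * G = (((n : ℝ)/(d:ℝ) : ℝ) : ℂ) • G)
    (htr : G.trace = (n : ℂ)) :
    ∃ F : Matrix (Fin d) (Fin n) ℂ, Fᴴ * F = G ∧ F * Fᴴ = ((n : ℂ)/(d : ℂ)) • 1 := by
  set c : ℝ := (n : ℝ)/(d : ℝ) with hc
  have hc0 : 0 < c := by positivity
  set U : Matrix (Fin n) (Fin n) ℂ := (hG.eigenvectorUnitary : Matrix (Fin n) (Fin n) ℂ) with hU
  set ev : Fin n → ℝ := hG.eigenvalues with hev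
  set D : Matrix (Fin n) (Fin n) ℂ := diagonal (fun i => (ev i : ℂ)) with hD
  have hspec : G = U * D * Uᴴ := by
    have := hG.spectral_theorem
    rw [Unitary.conjStarAlgAut_apply, Matrix.star_eq_conjTranspose] at this
    exact this
  have hUU : Uᴴ * U = 1 := by
    rw [← Matrix.star_eq_conjTranspose]
    exact Matrix.mem_unitaryGroup_iff'.mp hG.eigenvectorUnitary.2
  have hUU' : U * Uᴴ = 1 := by
    rw [← Matrix.star_eq_conjTranspose]
    exact Matrix.mem_unitaryGroup_iff.mp hG.eigenvectorUnitary.2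
  have hUGU : Uᴴ * G * U = D := by
    rw [hspec]
    calc Uᴴ * (U * D * Uᴴ) * U = (Uᴴ * U) * D * (Uᴴ * U) := by noncomm_ring
    _ = D := by rw [hUU]; simp
  have hDD : D * D = (c : ℂ) • D := by
    calc D * D = (Uᴴ * G * U) * (Uᴴ * G * U) := by rw [hUGU]
    _ = Uᴴ * (G * (U * Uᴴ) * G) * U := by noncomm_ring
    _ = Uᴴ * (G * G) * U := by rw [hUU']; simp
    _ = (c:ℂ) • (Uᴴ * G * U) := by rw [hG2]; simp [Matrix.mul_smul, Matrix.smul_mul]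
    _ = (c:ℂ) • D := by rw [hUGU]
  have heva : ∀ i, ev i = 0 ∨ ev i = c := by
    intro i
    have h := congrFun (congrFun hDD i) i
    simp only [hD, diagonal_mul_diagonal, diagonal_apply_eq, Matrix.smul_apply, smul_eq_mul] at h
    have h' : ev i * ev i = c * ev i := by exact_mod_cast h
    rcases mul_eq_mul_right_iff.mp h' with h | h
    · right; exact h
    · left; exact h
  have htrD : ∑ i, ev i = (n : ℝ) := by
    have h1 : G.trace = D.trace := by
      rw [hspec, Matrix.trace_mul_cycle]
      rw [hUU, Matrix.one_mul]
    rw [htr] at h1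
    have h2 : D.trace = ((∑ i, ev i : ℝ) : ℂ) := by
      simp [hD, Matrix.trace_diagonal]
    rw [h2] at h1
    exact_mod_cast h1.symm
  set T := Finset.univ.filter (fun i => ev i = c) with hT
  have hTcard : T.card = d := by
    have hsum : ∑ i, ev i = (T.card : ℝ) * c := by
      rw [← Finset.sum_filter_add_sum_filter_not Finset.univ (fun i => ev i = c)]
      have h1 : ∑ i ∈ Finset.univ.filter (fun i => ev i = c), ev i = (T.card : ℝ) * c := by
        rw [Finset.sum_congr rfl (fun i hi => (Finset.mem_filter.mp hi).2)]
        simp [mul_comm]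
        exact Or.inl rfl
      have h2 : ∑ i ∈ Finset.univ.filter (fun i => ¬ ev i = c), ev i = 0 := by
        apply Finset.sum_eq_zero
        intro i hi
        rcases heva i with h | h
        · exact h
        · exact absurd h (Finset.mem_filter.mp hi).2
      rw [h1, h2, add_zero]
    have hcast : (T.card : ℝ) = d := by
      have hd' : (d:ℝ) ≠ 0 := by positivity
      have hn' : (n:ℝ) ≠ 0 := by positivity
      rw [htrD, hc] at hsum
      field_simp at hsum
      have h2 : (n:ℝ) * (T.card:ℝ) = (n:ℝ) * (d:ℝ) := by linear_combination (-(n:ℝ)) * hsum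
      exact mul_left_cancel₀ hn' h2
    exact_mod_cast hcast
  have hcard : Fintype.card (Fin d) = Fintype.card {i // i ∈ T} := by
    simp [Fintype.card_coe, hTcard]
  set e : Fin d ≃ {i // i ∈ T} := Fintype.equivOfCardEq hcard with he
  set F : Matrix (Fin d) (Fin n) ℂ :=
    Matrix.of (fun k j => (Real.sqrt c : ℂ) * star (U j (e k).1)) with hF
  have hsqrt : (Real.sqrt c : ℂ) * (Real.sqrt c : ℂ) = (c : ℂ) := by
    rw [← Complex.ofReal_mul, Real.mul_self_sqrt hc0.le]
  refine ⟨F, ?_, ?_⟩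
  · ext j j'
    have lhs : (Fᴴ * F) j j' = ∑ k, (c : ℂ) * (U j (e k).1 * star (U j' (e k).1)) := by
      simp only [Matrix.mul_apply, Matrix.conjTranspose_apply, hF, Matrix.of_apply]
      apply Finset.sum_congr rfl
      intro k _
      simp only [star_mul', star_star, Complex.star_def, Complex.conj_conj, Complex.conj_ofReal]
      linear_combination (U j (e k).1 * (starRingEnd ℂ) (U j' (e k).1)) * hsqrt
    have step : ∑ k, (c : ℂ) * (U j (e k).1 * star (U j' (e k).1))
        = ∑ i ∈ T, (c : ℂ) * (U j i * star (U j' i)) := by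
      rw [← Finset.sum_coe_sort T (fun i => (c : ℂ) * (U j i * star (U j' i)))]
      exact Equiv.sum_comp e (fun t => (c : ℂ) * (U j t.1 * star (U j' t.1)))
    have hUD : U * D = Matrix.of (fun a b => U a b * (ev b : ℂ)) := by
      ext a b
      simp [hD, Matrix.mul_diagonal]
    have rhs : G j j' = ∑ i, U j i * (ev i : ℂ) * star (U j' i) := by
      rw [hspec, hUD]
      simp [Matrix.mul_apply, Matrix.conjTranspose_apply]
    rw [lhs, step, rhs]
    rw [← Finset.sum_filter_add_sum_filter_not Finset.univ (fun i => ev i = c)]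
    have h2 : ∑ i ∈ Finset.univ.filter (fun i => ¬ ev i = c), U j i * (ev i : ℂ) * star (U j' i) = 0 := by
      apply Finset.sum_eq_zero
      intro i hi
      have : ev i = 0 := by
        rcases heva i with h | h
        · exact h
        · exact absurd h (Finset.mem_filter.mp hi).2
      rw [this]; simp
    rw [h2, add_zero, ← hT]
    apply Finset.sum_congr rfl
    intro i hi
    have hevi : ev i = c := by
      rw [hT] at hi; exact (Finset.mem_filter.mp hi).2
    rw [hevi]; ring
  · ext k k'
    have lhs : (F * Fᴴ) k k' = (c : ℂ) * ∑ j, star (U j (e k).1) * U j (e k').1 := by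
      simp only [Matrix.mul_apply, Matrix.conjTranspose_apply, hF, Matrix.of_apply,
        Finset.mul_sum]
      apply Finset.sum_congr rfl
      intro j _
      simp only [star_mul', star_star, Complex.star_def, Complex.conj_conj, Complex.conj_ofReal]
      linear_combination ((starRingEnd ℂ) (U j (e k).1) * U j (e k').1) * hsqrt
    have inner : ∑ j, star (U j (e k).1) * U j (e k').1 = (1 : Matrix (Fin n) (Fin n) ℂ) (e k).1 (e k').1 := by
      rw [← hUU]
      simp [Matrix.mul_apply, Matrix.conjTranspose_apply]
    rw [lhs, inner]
    have hcc : ((n:ℂ)/(d:ℂ)) = (c : ℂ) := by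
      rw [hc]; push_cast; ring
    rw [hcc]
    by_cases hkk : k = k'
    · subst hkk; simp [Matrix.one_apply]
    · have : (e k).1 ≠ (e k').1 := by
        intro h
        exact hkk (e.injective (Subtype.ext h))
      simp [Matrix.one_apply, this, hkk]

lemma sq_identity {N : Type} [Fintype N] [DecidableEq N]
    (J C S : Matrix N N ℂ) (p q r w : ℂ)
    (hJJ : J * J = w • J) (hJC : J * C = 0) (hCJ : C * J = 0)
    (hCC : C * C = J - w • 1)
    (hS : S = p • (J - 1) + q • C)
    (h1 : p*p*(w-2) + q*q = r*p)
    (h2 : p*p - q*q*w = w - 1 - r*p)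
    (h3 : -(2*p*q) = r*q) :
    S * S = r • S + (w - 1) • 1 := by
  rw [hS]
  have expand : (p • (J - 1) + q • C) * (p • (J - 1) + q • C) =
      (p*p) • ((J-1)*(J-1)) + (p*q) • ((J-1)*C) + (p*q) • (C*(J-1)) + (q*q) • (C*C) := by
    simp only [add_mul, mul_add, smul_mul_assoc, mul_smul_comm, smul_smul]
    module
  rw [expand]
  have e1 : (J - 1) * (J - 1) = (w - 2) • J + 1 := by
    rw [sub_mul, mul_sub, mul_sub, hJJ, mul_one, one_mul, mul_one]
    module
  have e2 : (J - 1) * C = -C := by rw [sub_mul, hJC, one_mul]; module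
  have e3 : C * (J - 1) = -C := by rw [mul_sub, hCJ, mul_one]; module
  rw [e1, e2, e3, hCC]
  match_scalars
  · linear_combination h1
  · linear_combination h2
  · linear_combination h3

set_option maxHeartbeats 1000000 in
/-- **Strohmer/Renes via core adjacency.** Let `m > 2` and let
`H = [[1, 𝟙ᵀ], [−𝟙, A − Aᵀ + I]]` be a normalized skew Hadamard matrix of order `m`, where
`A` is a `(0,1)`-matrix of order `m − 1` with zero diagonal. With `n = m − 1` and
`α = −1/√m + i·√(1 − 1/m)`, the matrix `S = α·A + ᾱ·Aᵀ` is the signature matrix of a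
complex ETF of size `((n−1)/2) × n`; equivalently, `S` is self-adjoint with zero diagonal
and unimodular off-diagonal entries and satisfies `S² = (2/√(n+1))·S + (n−1)·I`. -/
theorem strohmer_renes (m : ℕ) (hm : 2 < m)
    (A : Matrix (Fin (m - 1)) (Fin (m - 1)) ℝ)
    (hA01 : ∀ i j, A i j = 0 ∨ A i j = 1) (hAdiag : ∀ i, A i i = 0)
    (hH : IsSkewHadamard
      (Matrix.fromBlocks (1 : Matrix Unit Unit ℝ) (Matrix.of fun _ _ => (1 : ℝ))
        (Matrix.of fun _ _ => (-1 : ℝ)) (A - Aᵀ + 1)))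
    (α : ℂ) (hα : α = -((1 / Real.sqrt m : ℝ) : ℂ) +
      Complex.I * ((Real.sqrt (1 - 1 / (m : ℝ)) : ℝ) : ℂ))
    (S : Matrix (Fin (m - 1)) (Fin (m - 1)) ℂ)
    (hS : S = α • A.map ((↑) : ℝ → ℂ) + (starRingEnd ℂ α) • (Aᵀ).map ((↑) : ℝ → ℂ)) :
    (∃ F : Matrix (Fin ((m - 2) / 2)) (Fin (m - 1)) ℂ, IsSignatureOf S F) ∧
      Sᴴ = S ∧ (∀ i, S i i = 0) ∧
      (∀ i j, i ≠ j → ‖S i j‖ = 1) ∧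
      S ^ 2 = (((2 / Real.sqrt (((m : ℝ) - 1) + 1) : ℝ)) : ℂ) • S +
        (((m : ℂ) - 1) - 1) • 1 := by
  obtain ⟨⟨hent, horr⟩, -⟩ := hH
  have hm1R : ((m-1:ℕ):ℝ) = (m:ℝ) - 1 := by
    rw [Nat.cast_sub (by omega)]; norm_num
  -- column sums of A - Aᵀ vanish
  have hcol : ∀ j, ∑ i, (A - Aᵀ) i j = 0 := by
    intro j
    have h := congrFun (congrFun horr (Sum.inl ())) (Sum.inr j)
    simp [Matrix.mul_apply, Fintype.sum_sum_type, Matrix.one_apply,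
      Matrix.smul_apply, Finset.sum_add_distrib, Finset.sum_ite_eq,
      Finset.sum_sub_distrib] at h
    simp only [Matrix.sub_apply, Matrix.transpose_apply]
    rw [Finset.sum_sub_distrib]
    linarith
  -- orthogonality of columns of (A - Aᵀ) + I
  have horth : ∀ i j, ∑ k, ((A - Aᵀ) k i + (if k = i then (1:ℝ) else 0)) * ((A - Aᵀ) k j + (if k = j then (1:ℝ) else 0))
       = (m:ℝ) * (if i = j then 1 else 0) - 1 := by
    intro i j
    have h := congrFun (congrFun horr (Sum.inr i)) (Sum.inr j)
    simp [Matrix.mul_apply, Fintype.sum_sum_type, Matrix.one_apply,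
      Matrix.smul_apply] at h
    simp only [Matrix.sub_apply, Matrix.transpose_apply]
    by_cases hij : i = j
    · subst hij
      simp only [eq_self_iff_true, if_true] at h ⊢
      rw [hm1R] at h
      linarith
    · simp only [if_neg hij] at h ⊢
      linarith
  set C : Matrix (Fin (m-1)) (Fin (m-1)) ℝ := A - Aᵀ with hC
  have hCskew : ∀ i j, C i j = -(C j i) := by
    intro i j
    rw [hC]
    simp only [Matrix.sub_apply, Matrix.transpose_apply]
    ring
  have hCent : ∀ i j, C i j = A i j - A j i := by
    intro i j
    rw [hC]
    simp only [Matrix.sub_apply, Matrix.transpose_apply]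
  -- ∑_k C k i * C k j
  have hCsum : ∀ i j, ∑ k, C k i * C k j
      = (m:ℝ) * (if i = j then 1 else 0) - 1 - (if i = j then 1 else 0) := by
    intro i j
    have h := horth i j
    have expand : ∑ k, (C k i + (if k = i then (1:ℝ) else 0)) * (C k j + (if k = j then (1:ℝ) else 0))
        = (∑ k, C k i * C k j) + C j i + C i j + (if i = j then 1 else 0) := by
      have hterm : ∀ k, (C k i + (if k = i then (1:ℝ) else 0)) * (C k j + (if k = j then (1:ℝ) else 0))
          = C k i * C k j + (if k = j then C k i else 0) + (if k = i then C k j else 0)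
            + (if k = i then (if k = j then (1:ℝ) else 0) else 0) := by
        intro k
        split_ifs <;> ring
      rw [Finset.sum_congr rfl (fun k _ => hterm k)]
      simp only [Finset.sum_add_distrib, Finset.sum_ite_eq', Finset.mem_univ, if_true]
    rw [expand] at h
    have := hCskew i j
    linarith
  -- real identity C*C = J - (m-1) I
  have hCCR : ∀ i j, (C * C) i j = 1 - ((m:ℝ)-1) * (if i = j then 1 else 0) := by
    intro i j
    have h1 : (C * C) i j = ∑ k, C i k * C k j := Matrix.mul_apply
    have h2 : ∑ k, C i k * C k j = -∑ k, C k i * C k j := by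
      rw [← Finset.sum_neg_distrib]
      apply Finset.sum_congr rfl
      intro k _
      rw [hCskew i k]; ring
    rw [h1, h2, hCsum i j]
    by_cases hij : i = j <;> simp [hij] <;> ring
  -- entries of C are ±1 off-diagonal
  have hpm : ∀ i j, i ≠ j → C i j = 1 ∨ C i j = -1 := by
    intro i j hij
    have h := hent (Sum.inr i) (Sum.inr j)
    simp [Matrix.fromBlocks_apply₂₂, Matrix.one_apply, hij, hC] at h
    simpa [hC, Matrix.sub_apply] using h
  -- tournament condition
  have htour : ∀ i j, i ≠ j → A i j + A j i = 1 := by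
    intro i j hij
    have h := hpm i j hij
    have hc : C i j = A i j - A j i := by simp [hC, Matrix.sub_apply]
    rcases hA01 i j with h1 | h1 <;> rcases hA01 j i with h2 | h2 <;>
      rw [hc, h1, h2] at h <;> simp [h1, h2] <;> norm_num at h
  -- m is even via counting
  have hj0 : 0 < m - 1 := by omega
  set j0 : Fin (m-1) := ⟨0, hj0⟩ with hj0def
  set t : Fin (m-1) → ℕ := fun i => if C i j0 = 1 then 1 else 0 with ht
  have hterm : ∀ i, C i j0 * C i j0 + C i j0 = 2 * (t i : ℝ) := by
    intro i
    have hc : C i j0 = A i j0 - A j0 i := by simp [hC, Matrix.sub_apply]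
    rcases hA01 i j0 with h1 | h1 <;> rcases hA01 j0 i with h2 | h2 <;>
      simp [ht, hc, h1, h2] <;> norm_num
  have hsq : ∑ i, C i j0 * C i j0 = (m:ℝ) - 2 := by
    have := hCsum j0 j0
    simp at this
    linarith
  have hmsum : (m:ℝ) = 2 * ((∑ i, t i : ℕ) : ℝ) + 2 := by
    have h1 : ∑ i, (C i j0 * C i j0 + C i j0) = ((m:ℝ) - 2) + 0 := by
      rw [Finset.sum_add_distrib, hsq, hcol j0]
    rw [Finset.sum_congr rfl (fun i _ => hterm i)] at h1
    push_cast at h1 ⊢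
    rw [← Finset.mul_sum] at h1
    linarith
  have hmeq : m = 2 * (∑ i, t i) + 2 := by exact_mod_cast hmsum
  have hk2 : 2 * ((m-2)/2) = m - 2 := by omega
  have hkpos : 0 < (m-2)/2 := by omega
  have hkR : (((m-2)/2 : ℕ):ℝ) = ((m:ℝ)-2)/2 := by
    have h1 : ((2 * ((m-2)/2) : ℕ) : ℝ) = ((m-2:ℕ):ℝ) := by rw [hk2]
    have h2 : ((m-2:ℕ):ℝ) = (m:ℝ) - 2 := by
      rw [Nat.cast_sub (by omega)]; norm_num
    push_cast at h1
    linarith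
  -- scalar setup
  set s : ℝ := Real.sqrt m with hsdef
  have hs_pos : 0 < s := Real.sqrt_pos.mpr (by positivity)
  have hs2R : s * s = (m:ℝ) := Real.mul_self_sqrt (by positivity)
  have hs2 : (s:ℂ) * (s:ℂ) = (m:ℂ) := by exact_mod_cast hs2R
  have hsne : (s:ℂ) ≠ 0 := by exact_mod_cast Complex.ofReal_ne_zero.mpr hs_pos.ne'
  have hmne : (m:ℂ) ≠ 0 := by
    simp only [ne_eq, Nat.cast_eq_zero]; omega
  set b : ℝ := Real.sqrt (1 - 1/(m:ℝ)) with hbdef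
  have hb2R : b * b = 1 - 1/(m:ℝ) := by
    apply Real.mul_self_sqrt
    have : (1:ℝ) ≤ m := by exact_mod_cast (by omega : 1 ≤ m)
    have hmpos : (0:ℝ) < m := by positivity
    rw [sub_nonneg, div_le_one hmpos]
    linarith
  set p : ℂ := -((1/s : ℝ):ℂ) with hpdef
  set q : ℂ := Complex.I * (b:ℂ) with hqdef
  have hαpq : α = p + q := by rw [hα, hpdef, hqdef]
  have hconj : (starRingEnd ℂ) α = p - q := by
    rw [hα, hpdef, hqdef]
    simp only [map_add, map_neg, _root_.map_mul, Complex.conj_ofReal, Complex.conj_I]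
    ring
  have hq2 : q * q = 1/(m:ℂ) - 1 := by
    rw [hqdef]
    have : ((b:ℂ) * (b:ℂ)) = ((1 - 1/(m:ℝ) : ℝ) : ℂ) := by
      rw [← Complex.ofReal_mul, hb2R]
    push_cast at this
    have hI : Complex.I * Complex.I = -1 := Complex.I_mul_I
    calc Complex.I * (b:ℂ) * (Complex.I * (b:ℂ)) = (Complex.I * Complex.I) * ((b:ℂ)*(b:ℂ)) := by ring
    _ = -((b:ℂ)*(b:ℂ)) := by rw [hI]; ring
    _ = 1/(m:ℂ) - 1 := by rw [this]; ring
  have hpval : p = -(1/(s:ℂ)) := by rw [hpdef]; push_cast; ring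
  set r : ℂ := (((2 / Real.sqrt (((m : ℝ) - 1) + 1) : ℝ)) : ℂ) with hrdef
  have hrs : Real.sqrt (((m : ℝ) - 1) + 1) = s := by
    rw [hsdef]; norm_num
  have hrval : r = 2/(s:ℂ) := by rw [hrdef, hrs]; push_cast; ring
  -- complex matrices
  set J : Matrix (Fin (m-1)) (Fin (m-1)) ℂ := Matrix.of (fun _ _ => 1) with hJdef
  set Cc : Matrix (Fin (m-1)) (Fin (m-1)) ℂ := C.map ((↑) : ℝ → ℂ) with hCcdef
  have hkey : S = p • (J - 1) + q • Cc := by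
    ext i j
    simp only [hS, Matrix.add_apply, Matrix.smul_apply, Matrix.map_apply,
      Matrix.transpose_apply, smul_eq_mul, hJdef, hCcdef, Matrix.sub_apply,
      Matrix.of_apply, hC]
    by_cases hij : i = j
    · subst hij
      simp [hAdiag i, Matrix.one_apply]
    · have ha : ((A i j : ℂ)) + ((A j i : ℂ)) = 1 := by
        exact_mod_cast htour i j hij
      simp only [Matrix.one_apply, if_neg hij]
      push_cast
      linear_combination (A i j : ℂ) * hαpq + (A j i : ℂ) * hconj + p * ha
  have hJJ : J * J = ((m:ℂ)-1) • J := by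
    ext i j
    simp [hJdef, Matrix.mul_apply, Matrix.smul_apply, Finset.sum_const, Finset.card_univ]
    rw [Nat.cast_sub (by omega : 1 ≤ m)]
    norm_num
  have hJC : J * Cc = 0 := by
    ext i j
    simp only [hJdef, hCcdef, Matrix.mul_apply, Matrix.of_apply, Matrix.map_apply,
      one_mul, Matrix.zero_apply]
    rw [← Complex.ofReal_sum]
    rw [hcol j]
    simp
  have hCJ : Cc * J = 0 := by
    ext i j
    simp only [hJdef, hCcdef, Matrix.mul_apply, Matrix.of_apply, Matrix.map_apply,
      mul_one, Matrix.zero_apply]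
    rw [← Complex.ofReal_sum]
    have : ∑ k, C i k = 0 := by
      rw [Finset.sum_congr rfl (fun k _ => hCskew i k), Finset.sum_neg_distrib, hcol i]
      simp
    rw [this]; simp
  have hCC : Cc * Cc = J - ((m:ℂ)-1) • 1 := by
    ext i j
    simp only [hCcdef, Matrix.mul_apply, Matrix.map_apply, Matrix.sub_apply,
      Matrix.smul_apply, hJdef, Matrix.of_apply, Matrix.one_apply, smul_eq_mul]
    rw [show ∑ k, ((C i k : ℂ)) * ((C k j : ℂ)) = (((C * C) i j : ℝ) : ℂ) by
      rw [Matrix.mul_apply]; push_cast; rfl]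
    rw [hCCR i j]
    by_cases hij : i = j <;> simp [hij] <;> push_cast <;> ring
  -- scalar identities
  have h1 : p*p*(((m:ℂ)-1)-2) + q*q = r*p := by
    rw [hpval, hrval, hq2, ← hs2]
    field_simp
    ring
  have h2 : p*p - q*q*((m:ℂ)-1) = ((m:ℂ)-1) - 1 - r*p := by
    rw [hpval, hrval, hq2, ← hs2]
    field_simp
    ring
  have h3 : -(2*p*q) = r*q := by
    rw [hpval, hrval]
    field_simp
  have hS2 : S * S = r • S + (((m:ℂ)-1) - 1) • 1 :=
    sq_identity J Cc S p q r ((m:ℂ)-1) hJJ hJC hCJ hCC hkey h1 h2 h3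
  -- basic structural facts
  have hHerm : Sᴴ = S := by
    ext i j
    simp only [Matrix.conjTranspose_apply, hS, Matrix.add_apply, Matrix.smul_apply,
      Matrix.map_apply, Matrix.transpose_apply, smul_eq_mul]
    simp only [star_add, star_mul', Complex.star_def, Complex.conj_conj, Complex.conj_ofReal]
    ring
  have hdiag : ∀ i, S i i = 0 := by
    intro i
    simp [hS, Matrix.add_apply, Matrix.smul_apply, Matrix.map_apply,
      Matrix.transpose_apply, hAdiag i]
  have habs : ‖α‖ = 1 := by
    have h1 : α.re = -(1/s) := by rw [hα, hpdef, hqdef]; simp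
    have h2 : α.im = b := by rw [hα, hpdef, hqdef]; simp
    rw [Complex.norm_def, Complex.normSq_apply, h1, h2]
    have hss : (1:ℝ)/s * (1/s) = 1/(m:ℝ) := by
      rw [div_mul_div_comm, one_mul, hs2R]
    have : -(1/s) * -(1/s) + b * b = 1 := by
      rw [hb2R, neg_mul_neg, hss]; ring
    rw [this, Real.sqrt_one]
  have hoff : ∀ i j, i ≠ j → ‖S i j‖ = 1 := by
    intro i j hij
    have hSij : S i j = p + q * ((C i j : ℝ):ℂ) := by
      rw [hkey]
      simp [hJdef, hCcdef, Matrix.add_apply, Matrix.smul_apply, Matrix.sub_apply,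
        Matrix.of_apply, Matrix.map_apply, Matrix.one_apply, hij]
    rcases hpm i j hij with h | h
    · rw [hSij, h]
      have : p + q * ((1:ℝ):ℂ) = α := by rw [hαpq]; push_cast; ring
      rw [this]; exact habs
    · rw [hSij, h]
      have : p + q * ((-1:ℝ):ℂ) = (starRingEnd ℂ) α := by rw [hconj]; push_cast; ring
      rw [this, Complex.norm_conj]; exact habs
  -- the Gram matrix
  set μ : ℝ := etfMu ((m-2)/2) (m-1) with hμdef
  have hm2R : (0:ℝ) < (m:ℝ) - 2 := by
    have : (2:ℝ) < m := by exact_mod_cast hm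
    linarith
  have hμR : μ = s / ((m:ℝ)-2) := by
    rw [hμdef]
    unfold etfMu
    rw [hkR, hm1R]
    have hinner : ((m:ℝ) - 1 - ((m:ℝ)-2)/2) / (((m:ℝ)-2)/2 * ((m:ℝ) - 1 - 1))
        = (s/((m:ℝ)-2))^2 := by
      rw [div_pow]
      have hs2' : s^2 = (m:ℝ) := by rw [sq]; exact hs2R
      rw [hs2']
      rw [div_eq_div_iff
        (mul_pos (by linarith : (0:ℝ) < ((m:ℝ)-2)/2) (by linarith : (0:ℝ) < (m:ℝ)-1-1)).ne'
        (pow_pos hm2R 2).ne']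
      ring
    rw [hinner, Real.sqrt_sq (by positivity)]
  have hμpos : 0 < μ := by rw [hμR]; positivity
  have hμC : (μ:ℂ) = (s:ℂ)/((m:ℂ)-2) := by rw [hμR]; push_cast; ring
  have hμC0 : ((μ:ℝ):ℂ) ≠ 0 := by
    simp only [ne_eq, Complex.ofReal_eq_zero]
    exact hμpos.ne'
  have hm2C : ((m:ℂ) - 2) ≠ 0 := by
    have : (m:ℂ) ≠ 2 := by
      intro h
      have : m = 2 := by exact_mod_cast h
      omega
    exact sub_ne_zero.mpr this
  set G : Matrix (Fin (m-1)) (Fin (m-1)) ℂ := 1 + (μ:ℂ) • S with hGdef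
  have hGH : G.IsHermitian := by
    show Gᴴ = G
    rw [hGdef]
    simp [Matrix.conjTranspose_add, Matrix.conjTranspose_smul, Complex.star_def,
      Complex.conj_ofReal, hHerm]
  have hkC : (((m-2)/2:ℕ):ℂ) = ((m:ℂ)-2)/2 := by
    have := congrArg (fun x:ℝ => (x:ℂ)) hkR
    push_cast at this
    exact this
  have hm1C : ((m-1:ℕ):ℂ) = (m:ℂ)-1 := by
    have := congrArg (fun x:ℝ => (x:ℂ)) hm1R
    push_cast at this
    exact this
  have hss2 : (s:ℂ)*(s:ℂ) - 2 ≠ 0 := by rw [hs2]; exact hm2C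
  have hG2 : G * G = ((((m-1:ℕ):ℝ)/(((m-2)/2:ℕ):ℝ) : ℝ) : ℂ) • G := by
    have expand : G * G = (1 : Matrix (Fin (m-1)) (Fin (m-1)) ℂ)
        + (2*(μ:ℂ)) • S + ((μ:ℂ)*(μ:ℂ)) • (S*S) := by
      rw [hGdef]
      simp only [mul_add, add_mul, one_mul, mul_one, smul_mul_assoc, mul_smul_comm, smul_smul]
      module
    rw [expand, hS2, hGdef]
    match_scalars
    · rw [hm1C, hkC, hμC, ← hs2]
      have hss2' : (s:ℂ)^2 - 2 ≠ 0 := by rw [sq]; exact hss2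
      field_simp [hss2, hss2']
      ring
    · rw [hm1C, hkC, hμC, hrval, ← hs2]
      field_simp [hss2]
      ring
  have htrace : G.trace = ((m-1:ℕ):ℂ) := by
    rw [hGdef, Matrix.trace_add, Matrix.trace_smul, Matrix.trace_one]
    have hStr : S.trace = 0 := by
      unfold Matrix.trace
      simp [Matrix.diag, hdiag]
    rw [hStr]
    simp
  obtain ⟨F, hF1, hF2⟩ := etf_construct (n := m-1) (d := (m-2)/2) hj0 hkpos G hGH hG2 htrace
  have hcards : etfMu (Fintype.card (Fin ((m-2)/2))) (Fintype.card (Fin (m-1))) = μ := by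
    rw [Fintype.card_fin, Fintype.card_fin, hμdef]
  refine ⟨⟨F, ⟨?_, ?_, ?_⟩, ?_⟩, hHerm, hdiag, hoff, ?_⟩
  · intro j
    rw [hF1, hGdef]
    simp [Matrix.add_apply, Matrix.smul_apply, Matrix.one_apply_eq, hdiag j]
  · intro j k hjk
    rw [hcards, hF1, hGdef]
    have : ((1 : Matrix (Fin (m-1)) (Fin (m-1)) ℂ) + (μ:ℂ) • S) j k = (μ:ℂ) * S j k := by
      simp [Matrix.add_apply, Matrix.smul_apply, Matrix.one_apply_ne hjk]
    rw [this, norm_mul, Complex.norm_real, Real.norm_eq_abs, hoff j k hjk, abs_of_pos hμpos, mul_one]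
  · simp only [Fintype.card_fin]
    exact hF2
  · rw [hcards, hF1, hGdef, add_sub_cancel_left, smul_smul, inv_mul_cancel₀ hμC0, one_smul]
  · rw [sq]
    exact hS2
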